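/- Let p > 1, N ≥ 1, and let η, ξ ∈ ℝ^N satisfy |η−ξ| + |ξ| > 0. Then |Φ_p(η,ξ)| ≤ max{p−1, 2^{2−p}} (|η−ξ| + |ξ|)^{p−2} |η|. -/

import Mathlib

open Real

/-- `x^(p-2) * x = x^(p-1)` for `x ≥ 0`, `p > 1` (rpow). -/
private lemma rpow_sub_two_mul_self {p x : ℝ} (hp : 1 < p) (hx : 0 ≤ x) :
    x ^ (p - 2) * x = x ^ (p - 1) := by
  rcases eq_or_lt_of_le hx with h | h
  · rw [← h, mul_zero, Real.zero_rpow (by linarith : p - 1 ≠ 0)]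
  · have : p - 1 = (p - 2) + 1 := by ring
    rw [this, Real.rpow_add_one (ne_of_gt h)]

/-- Scalar Lemma A: `A^(p-1) + B^(p-1) ≤ max (p-1) (2^(2-p)) * (A+B)^(p-1)`. -/
private lemma lemA {p : ℝ} (hp : 1 < p) {A B : ℝ} (hA : 0 ≤ A) (hB : 0 ≤ B) :
    A ^ (p - 1) + B ^ (p - 1) ≤ max (p - 1) (2 ^ (2 - p)) * (A + B) ^ (p - 1) := by
  have hs : 0 ≤ A + B := by linarith
  rcases le_or_gt 2 p with h2 | h2
  · -- p ≥ 2 : superadditivity and p-1 ≥ 1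
    have h1 : A ^ (p - 1) ≤ (A + B) ^ (p - 2) * A := by
      rcases eq_or_lt_of_le hA with hA0 | hA0
      · rw [← hA0, mul_zero, Real.zero_rpow (by linarith : p - 1 ≠ 0)]
      · rw [← rpow_sub_two_mul_self hp hA]
        exact mul_le_mul_of_nonneg_right
          (Real.rpow_le_rpow hA (by linarith) (by linarith)) hA
    have h1' : B ^ (p - 1) ≤ (A + B) ^ (p - 2) * B := by
      rcases eq_or_lt_of_le hB with hB0 | hB0
      · rw [← hB0, mul_zero, Real.zero_rpow (by linarith : p - 1 ≠ 0)]
      · rw [← rpow_sub_two_mul_self hp hB]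
        exact mul_le_mul_of_nonneg_right
          (Real.rpow_le_rpow hB (by linarith) (by linarith)) hB
    have h3 : (A + B) ^ (p - 2) * A + (A + B) ^ (p - 2) * B = (A + B) ^ (p - 1) := by
      rw [← mul_add]; exact rpow_sub_two_mul_self hp hs
    have h4 : (A + B) ^ (p - 1) ≤ (p - 1) * (A + B) ^ (p - 1) :=
      le_mul_of_one_le_left (Real.rpow_nonneg hs _) (by linarith)
    have h5 : (p - 1) * (A + B) ^ (p - 1) ≤ max (p - 1) (2 ^ (2 - p)) * (A + B) ^ (p - 1) :=
      mul_le_mul_of_nonneg_right (le_max_left _ _) (Real.rpow_nonneg hs _)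
    linarith
  · -- p < 2 : concavity of x ^ (p-1)
    have hcc := (Real.concaveOn_rpow (by linarith : (0:ℝ) ≤ p - 1)
      (by linarith : p - 1 ≤ 1)).2 (Set.mem_Ici.2 hA) (Set.mem_Ici.2 hB)
      (by norm_num : (0:ℝ) ≤ 1/2) (by norm_num : (0:ℝ) ≤ 1/2) (by norm_num)
    simp only [smul_eq_mul] at hcc
    -- hcc : 1/2 * A^(p-1) + 1/2 * B^(p-1) ≤ (1/2*A + 1/2*B) ^ (p-1)
    have e1 : (1/2 * A + 1/2 * B : ℝ) = (A + B) / 2 := by ring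
    rw [e1, Real.div_rpow hs (by norm_num : (0:ℝ) ≤ 2)] at hcc
    have h2p : (2:ℝ) ^ (2 - p) = 2 / 2 ^ (p - 1) := by
      rw [show (2:ℝ) - p = 1 - (p - 1) by ring, Real.rpow_sub (by norm_num : (0:ℝ) < 2),
        Real.rpow_one]
    have hpow2 : (0:ℝ) < 2 ^ (p - 1) := Real.rpow_pos_of_pos (by norm_num) _
    have key : A ^ (p - 1) + B ^ (p - 1) ≤ 2 ^ (2 - p) * (A + B) ^ (p - 1) := by
      rw [h2p, div_mul_eq_mul_div, le_div_iff₀ hpow2]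
      have := mul_le_mul_of_nonneg_right hcc (le_of_lt hpow2)
      calc (A ^ (p-1) + B ^ (p-1)) * 2 ^ (p-1)
          = (1/2 * A ^ (p-1) + 1/2 * B ^ (p-1)) * 2 ^ (p-1) * 2 := by ring
        _ ≤ (A + B) ^ (p-1) / 2 ^ (p-1) * 2 ^ (p-1) * 2 := by
            apply mul_le_mul_of_nonneg_right (mul_le_mul_of_nonneg_right hcc (le_of_lt hpow2))
            norm_num
        _ = 2 * (A + B) ^ (p-1) := by field_simp
    calc A ^ (p - 1) + B ^ (p - 1) ≤ 2 ^ (2 - p) * (A + B) ^ (p - 1) := key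
      _ ≤ max (p - 1) (2 ^ (2 - p)) * (A + B) ^ (p - 1) :=
          mul_le_mul_of_nonneg_right (le_max_right _ _) (Real.rpow_nonneg hs _)

/-- Scalar Lemma B (ordered version). -/
private lemma lemB {p : ℝ} (hp : 1 < p) {A B : ℝ} (hB : 0 ≤ B) (hBA : B ≤ A) (hA : 0 < A) :
    A ^ (p - 1) - B ^ (p - 1) ≤ max (p - 1) (2 ^ (2 - p)) * ((A + B) ^ (p - 2) * (A - B)) := by
  have hAB : 0 ≤ A - B := by linarith
  have hs : 0 < A + B := by linarith
  rcases le_or_gt 2 p with h2 | h2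
  · -- p ≥ 2 : Bernoulli
    have hber := one_add_mul_self_le_rpow_one_add
      (show (-1:ℝ) ≤ B / A - 1 by
        have : 0 ≤ B / A := div_nonneg hB hA.le; linarith)
      (show (1:ℝ) ≤ p - 1 by linarith)
    rw [show (1:ℝ) + (B / A - 1) = B / A by ring,
      Real.div_rpow hB hA.le] at hber
    -- hber : 1 + (p-1)*(B/A - 1) ≤ B^(p-1) / A^(p-1)
    have hApos : 0 < A ^ (p - 1) := Real.rpow_pos_of_pos hA _
    have hmul := mul_le_mul_of_nonneg_right hber hApos.le
    rw [div_mul_cancel₀ _ (ne_of_gt hApos)] at hmul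
    -- hmul : (1 + (p-1)*(B/A-1)) * A^(p-1) ≤ B^(p-1)
    have e1 : A ^ (p - 1) = A ^ (p - 2) * A := (rpow_sub_two_mul_self hp hA.le).symm
    have e2 : (B / A - 1) * A = B - A := by field_simp
    have step1 : A ^ (p - 1) - B ^ (p - 1) ≤ (p - 1) * (A ^ (p - 2) * (A - B)) := by
      have expand : (1 + (p-1)*(B/A-1)) * A ^ (p-1)
          = A ^ (p-1) + (p-1) * (A ^ (p-2) * ((B/A-1)*A)) := by
        rw [e1]; ring
      rw [expand, e2] at hmul
      linarith
    have step2 : A ^ (p - 2) ≤ (A + B) ^ (p - 2) :=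
      Real.rpow_le_rpow hA.le (by linarith) (by linarith)
    calc A ^ (p - 1) - B ^ (p - 1) ≤ (p - 1) * (A ^ (p - 2) * (A - B)) := step1
      _ ≤ (p - 1) * ((A + B) ^ (p - 2) * (A - B)) := by
          apply mul_le_mul_of_nonneg_left (mul_le_mul_of_nonneg_right step2 hAB)
          linarith
      _ ≤ max (p - 1) (2 ^ (2 - p)) * ((A + B) ^ (p - 2) * (A - B)) :=
          mul_le_mul_of_nonneg_right (le_max_left _ _)
            (mul_nonneg (Real.rpow_nonneg hs.le _) hAB)
  · -- p < 2
    have step1 : A ^ (p - 1) - B ^ (p - 1) ≤ A ^ (p - 2) * (A - B) := by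
      have h1 : A ^ (p - 2) * B ≤ B ^ (p - 1) := by
        rcases eq_or_lt_of_le hB with hB0 | hB0
        · rw [← hB0, mul_zero, Real.zero_rpow (by linarith : p - 1 ≠ 0)]
        · calc A ^ (p - 2) * B ≤ B ^ (p - 2) * B :=
                mul_le_mul_of_nonneg_right
                  (Real.rpow_le_rpow_of_nonpos hB0 hBA (by linarith)) hB
            _ = B ^ (p - 1) := rpow_sub_two_mul_self hp hB
      have e1 : A ^ (p - 1) = A ^ (p - 2) * A := (rpow_sub_two_mul_self hp hA.le).symm
      rw [e1]; nlinarith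
    have step2 : A ^ (p - 2) ≤ 2 ^ (2 - p) * (A + B) ^ (p - 2) := by
      have hh : A ^ (p - 2) ≤ ((A + B) / 2) ^ (p - 2) :=
        Real.rpow_le_rpow_of_nonpos (by linarith) (by linarith) (by linarith)
      have e3 : ((A + B) / 2) ^ (p - 2) = 2 ^ (2 - p) * (A + B) ^ (p - 2) := by
        rw [Real.div_rpow hs.le (by norm_num : (0:ℝ) ≤ 2),
          show (2:ℝ) - p = -(p - 2) by ring, Real.rpow_neg (by norm_num : (0:ℝ) ≤ 2)]
        field_simp
      rw [← e3]; exact hh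
    calc A ^ (p - 1) - B ^ (p - 1) ≤ A ^ (p - 2) * (A - B) := step1
      _ ≤ 2 ^ (2 - p) * (A + B) ^ (p - 2) * (A - B) :=
          mul_le_mul_of_nonneg_right step2 hAB
      _ = 2 ^ (2 - p) * ((A + B) ^ (p - 2) * (A - B)) := by ring
      _ ≤ max (p - 1) (2 ^ (2 - p)) * ((A + B) ^ (p - 2) * (A - B)) :=
          mul_le_mul_of_nonneg_right (le_max_right _ _)
            (mul_nonneg (Real.rpow_nonneg hs.le _) hAB)

/-- Scalar Lemma B, symmetrized. -/
private lemma lemB' {p : ℝ} (hp : 1 < p) {A B : ℝ} (hA : 0 ≤ A) (hB : 0 ≤ B)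
    (hs : 0 < A + B) :
    |A ^ (p - 1) - B ^ (p - 1)| ≤ max (p - 1) (2 ^ (2 - p)) * ((A + B) ^ (p - 2) * |A - B|) := by
  rcases le_total B A with hle | hle
  · have hA' : 0 < A := by
      rcases eq_or_lt_of_le hA with h0 | h0
      · linarith
      · exact h0
    rw [abs_of_nonneg (by linarith : (0:ℝ) ≤ A - B),
      abs_of_nonneg (sub_nonneg.2 (Real.rpow_le_rpow hB hle (by linarith)))]
    exact lemB hp hB hle hA'
  · have hB' : 0 < B := by
      rcases eq_or_lt_of_le hB with h0 | h0
      · linarith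
      · exact h0
    rw [abs_of_nonpos (by linarith : A - B ≤ 0),
      abs_of_nonpos (sub_nonpos.2 (Real.rpow_le_rpow hA hle (by linarith)))]
    have := lemB hp hA hle hB'
    rw [show B + A = A + B by ring, show B - A = -(A - B) by ring] at this
    linarith [this]

/-- The translated p-Laplacian nonlinearity
`Φ_p(η,ξ) = |η−ξ|^{p−2}(η−ξ) + |ξ|^{p−2}ξ`
(with the convention `|x|^{p−2}x = 0` when `x = 0`). -/
noncomputable def Phi (p : ℝ) {N : ℕ} (η ξ : EuclideanSpace ℝ (Fin N)) :
    EuclideanSpace ℝ (Fin N) :=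
  (‖η - ξ‖ ^ (p - 2)) • (η - ξ) + (‖ξ‖ ^ (p - 2)) • ξ

set_option maxHeartbeats 1000000 in
/-- Lemma 3.1, inequality (3.2): for `p > 1` and `|η−ξ| + |ξ| > 0`,
`|Φ_p(η,ξ)| ≤ max{p−1, 2^{2−p}} (|η−ξ| + |ξ|)^{p−2} |η|`. -/
theorem phi_norm_upper_bound (p : ℝ) (hp : 1 < p) (N : ℕ) (hN : 1 ≤ N)
    (η ξ : EuclideanSpace ℝ (Fin N)) (h : 0 < ‖η - ξ‖ + ‖ξ‖) :
    ‖Phi p η ξ‖ ≤ max (p - 1) (2 ^ (2 - p)) * (‖η - ξ‖ + ‖ξ‖) ^ (p - 2) * ‖η‖ := by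
  set a : EuclideanSpace ℝ (Fin N) := η - ξ with ha
  set b : EuclideanSpace ℝ (Fin N) := ξ with hb
  set A : ℝ := ‖a‖ with hA
  set B : ℝ := ‖b‖ with hB
  set C : ℝ := max (p - 1) (2 ^ (2 - p)) with hC
  set t : ℝ := inner ℝ a b with hti
  have hA0 : 0 ≤ A := norm_nonneg _
  have hB0 : 0 ≤ B := norm_nonneg _
  have hab : a + b = η := by simp [ha, hb]
  have hCpos : 0 < C := lt_of_lt_of_le (Real.rpow_pos_of_pos (by norm_num) (2 - p))
    (le_max_right _ _)
  -- norm of Phi squared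
  have hPhi : ‖Phi p η ξ‖ ^ 2
      = (A ^ (p-2) * A) ^ 2 + 2 * (A ^ (p-2) * B ^ (p-2)) * t + (B ^ (p-2) * B) ^ 2 := by
    have : Phi p η ξ = (A ^ (p-2)) • a + (B ^ (p-2)) • b := rfl
    rw [this, norm_add_sq_real, norm_smul, norm_smul, real_inner_smul_left,
      real_inner_smul_right, Real.norm_eq_abs, Real.norm_eq_abs,
      abs_of_nonneg (Real.rpow_nonneg hA0 _), abs_of_nonneg (Real.rpow_nonneg hB0 _)]
    ring
  -- norm of η squared
  have hEta : ‖η‖ ^ 2 = A ^ 2 + 2 * t + B ^ 2 := by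
    rw [← hab, norm_add_sq_real]
  -- Cauchy-Schwarz
  have hCS : |t| ≤ A * B := abs_real_inner_le_norm a b
  have ht1 : -(A * B) ≤ t := neg_le_of_neg_le (by linarith [neg_abs_le t, abs_le.1 hCS])
  have ht2 : t ≤ A * B := le_trans (le_abs_self t) hCS
  -- key rpow identities
  have e1 : A ^ (p-2) * A = A ^ (p-1) := rpow_sub_two_mul_self hp hA0
  have e2 : B ^ (p-2) * B = B ^ (p-1) := rpow_sub_two_mul_self hp hB0
  have e3 : (A + B) ^ (p-2) * (A + B) = (A + B) ^ (p-1) :=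
    rpow_sub_two_mul_self hp (by linarith)
  set X : ℝ := A ^ (p-1) with hX
  set Y : ℝ := B ^ (p-1) with hY
  have hX0 : 0 ≤ X := Real.rpow_nonneg hA0 _
  have hY0 : 0 ≤ Y := Real.rpow_nonneg hB0 _
  have hPAB : (A ^ (p-2) * B ^ (p-2)) * (A * B) = X * Y := by
    linear_combination (B ^ (p-2) * B) * e1 + X * e2
  set M : ℝ := (C * (A + B) ^ (p-2)) ^ 2 with hM
  -- squared scalar inequalities
  have sq1 : (X + Y) ^ 2 ≤ M * (A + B) ^ 2 := by
    have h1 : X + Y ≤ C * (A + B) ^ (p-1) := lemA hp hA0 hB0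
    have h2 : (X + Y) ^ 2 ≤ (C * (A + B) ^ (p-1)) ^ 2 :=
      pow_le_pow_left₀ (by linarith) h1 2
    calc (X + Y) ^ 2 ≤ (C * (A + B) ^ (p-1)) ^ 2 := h2
      _ = M * (A + B) ^ 2 := by rw [hM, ← e3]; ring
  have sq2 : (X - Y) ^ 2 ≤ M * (A - B) ^ 2 := by
    have h1 : |X - Y| ≤ C * ((A + B) ^ (p-2) * |A - B|) := lemB' hp hA0 hB0 h
    have h2 : |X - Y| ^ 2 ≤ (C * ((A + B) ^ (p-2) * |A - B|)) ^ 2 :=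
      pow_le_pow_left₀ (abs_nonneg _) h1 2
    calc (X - Y) ^ 2 = |X - Y| ^ 2 := (sq_abs _).symm
      _ ≤ (C * ((A + B) ^ (p-2) * |A - B|)) ^ 2 := h2
      _ = M * (A - B) ^ 2 := by rw [hM, ← sq_abs (A - B)]; ring
  -- main squared inequality
  have key : ‖Phi p η ξ‖ ^ 2 ≤ (C * (A + B) ^ (p-2) * ‖η‖) ^ 2 := by
    rw [hPhi, e1, e2, show (C * (A + B) ^ (p-2) * ‖η‖) ^ 2
      = (C * (A + B) ^ (p-2)) ^ 2 * ‖η‖ ^ 2 by ring, hEta, ← hM]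
    set P : ℝ := A ^ (p-2) * B ^ (p-2) with hP
    rcases le_total P M with hPM | hPM
    · have hprod : 0 ≤ (M - P) * (t + A * B) :=
        mul_nonneg (by linarith) (by linarith)
      have expand : M * (A ^ 2 + 2 * t + B ^ 2) - (X ^ 2 + 2 * P * t + Y ^ 2)
          = (M * (A - B) ^ 2 - (X - Y) ^ 2) + 2 * ((M - P) * (t + A * B))
            + 2 * (P * (A * B) - X * Y) := by ring
      linarith [sq2, hprod, hPAB, expand]
    · have hprod : 0 ≤ (P - M) * (A * B - t) :=
        mul_nonneg (by linarith) (by linarith)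
      have expand : M * (A ^ 2 + 2 * t + B ^ 2) - (X ^ 2 + 2 * P * t + Y ^ 2)
          = (M * (A + B) ^ 2 - (X + Y) ^ 2) + 2 * ((P - M) * (A * B - t))
            + 2 * (X * Y - P * (A * B)) := by ring
      linarith [sq1, hprod, hPAB, expand]
  have hRnn : 0 ≤ C * (A + B) ^ (p-2) * ‖η‖ :=
    mul_nonneg (mul_nonneg hCpos.le (Real.rpow_nonneg (by linarith) _)) (norm_nonneg _)
  exact le_of_pow_le_pow_left₀ two_ne_zero hRnn key
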